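/- Fix uniform bids b_{ij} = α_i v_{ij} with multipliers α_i ≥ 1 and an allocation a valid under b. Then for mechanism M ∈ {GSP, VCG}, the social welfare plus revenue of a is at least the optimal social welfare: Wel(a) + Rev^M(a, b) ≥ Wel^opt. -/

import Mathlib

open Finset MeasureTheory

namespace SponsoredShopping

noncomputable section

/-- An item is a pair `(i, j)`: bidder `i`'s `j`-th item. -/
abbrev Item (n m : ℕ) : Type := Fin n × Fin m

/-- An allocation assigns to each rank `k` (0-based) an item. -/
abbrev Alloc (n m : ℕ) : Type := Fin (n * m) ≃ Item n m

/-- Maximum of `f` over a finite set, with value `0` on the empty set. -/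
def fmax {ι : Type*} (s : Finset ι) (f : ι → ℝ) : ℝ :=
  WithBot.unbotD 0 (s.sup fun i => (f i : WithBot ℝ))

variable {n m : ℕ}

/-- An allocation is valid under bids `b` if bids are nonincreasing along ranks. -/
def ValidUnder (b : Item n m → ℝ) (a : Alloc n m) : Prop :=
  ∀ k k' : Fin (n * m), k ≤ k' → b (a k') ≤ b (a k)

/-- The value of bidder `i` under allocation `a`
(`c k` is the CTR of slot `k`, with `c k = 0` for `k ≥ K`). -/
def bidderValue (c : ℕ → ℝ) (v : Item n m → ℝ) (a : Alloc n m) (i : Fin n) : ℝ :=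
  ∑ k : Fin (n * m), if (a k).1 = i then c k * v (a k) else 0

/-- Social welfare of an allocation. -/
def wel (c : ℕ → ℝ) (v : Item n m → ℝ) (a : Alloc n m) : ℝ :=
  ∑ k : Fin (n * m), c k * v (a k)

/-- Optimal social welfare. -/
def welOpt (c : ℕ → ℝ) (v : Item n m → ℝ) : ℝ :=
  fmax (univ : Finset (Alloc n m)) (wel c v)

/-- GSP per-click price of the item ranked `k`: highest bid among lower-ranked
items belonging to other bidders (`0` if none). -/
def gspPrice (b : Item n m → ℝ) (a : Alloc n m) (k : Fin (n * m)) : ℝ :=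
  fmax (univ.filter fun k' : Fin (n * m) => k < k' ∧ (a k').1 ≠ (a k).1)
    (fun k' => b (a k'))

/-- Total GSP payment of bidder `i`. -/
def gspPay (c : ℕ → ℝ) (b : Item n m → ℝ) (a : Alloc n m) (i : Fin n) : ℝ :=
  ∑ k : Fin (n * m), if (a k).1 = i then c k * gspPrice b a k else 0

/-- Bid-welfare of an allocation. -/
def bidWelfare (c : ℕ → ℝ) (b : Item n m → ℝ) (a : Alloc n m) : ℝ :=
  ∑ k : Fin (n * m), c k * b (a k)

/-- Bids with bidder `i`'s bids zeroed out. -/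
def exclBids (b : Item n m → ℝ) (i : Fin n) : Item n m → ℝ :=
  fun x => if x.1 = i then 0 else b x

/-- Bid-welfare obtained by bidders other than `i` in allocation `a`. -/
def othersWelfare (c : ℕ → ℝ) (b : Item n m → ℝ) (a : Alloc n m) (i : Fin n) : ℝ :=
  ∑ k : Fin (n * m), if (a k).1 ≠ i then c k * b (a k) else 0

/-- Optimal counterfactual bid-welfare without bidder `i`. -/
def woptWithout (c : ℕ → ℝ) (b : Item n m → ℝ) (i : Fin n) : ℝ :=
  fmax (univ : Finset (Alloc n m)) (fun a' => bidWelfare c (exclBids b i) a')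

/-- VCG payment of bidder `i`. -/
def vcgPay (c : ℕ → ℝ) (b : Item n m → ℝ) (a : Alloc n m) (i : Fin n) : ℝ :=
  woptWithout c b i - othersWelfare c b a i

/-- The two mechanisms considered. -/
inductive Mech | gsp | vcg

/-- Payment of bidder `i` under mechanism `M`. -/
def pay : Mech → (ℕ → ℝ) → (Item n m → ℝ) → Alloc n m → Fin n → ℝ
  | .gsp => gspPay
  | .vcg => vcgPay

/-- `S_k(a)`: the set of items assigned to the first `k` slots in `a`. -/
def topk (a : Alloc n m) (k : ℕ) : Finset (Item n m) :=
  (univ.filter fun r : Fin (n * m) => (r : ℕ) < k).image a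

/-! ### Auxiliary lemmas about `fmax` -/

lemma le_fmax {ι : Type*} {s : Finset ι} {f : ι → ℝ} {i : ι} (hi : i ∈ s) :
    f i ≤ fmax s f := by
  have h : (f i : WithBot ℝ) ≤ s.sup (fun j => (f j : WithBot ℝ)) :=
    Finset.le_sup (f := fun j => ((f j : ℝ) : WithBot ℝ)) hi
  unfold fmax
  rcases hs : s.sup (fun j => (f j : WithBot ℝ)) with _ | x
  · rw [hs] at h; exact absurd h (WithBot.not_coe_le_bot _)
  · rw [hs] at h
    exact (WithBot.coe_le_coe.mp h)

lemma fmax_le {ι : Type*} {s : Finset ι} {f : ι → ℝ} {B : ℝ} (hB : 0 ≤ B)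
    (h : ∀ i ∈ s, f i ≤ B) : fmax s f ≤ B := by
  have hsup : s.sup (fun j => (f j : WithBot ℝ)) ≤ (B : WithBot ℝ) :=
    Finset.sup_le fun i hi => by exact_mod_cast h i hi
  unfold fmax
  rcases hs : s.sup (fun j => (f j : WithBot ℝ)) with _ | x
  · exact hB
  · rw [hs] at hsup
    exact (WithBot.coe_le_coe.mp hsup)

lemma fmax_nonneg {ι : Type*} {s : Finset ι} {f : ι → ℝ}
    (h : ∀ i ∈ s, 0 ≤ f i) : 0 ≤ fmax s f := by
  rcases s.eq_empty_or_nonempty with rfl | ⟨i, hi⟩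
  · simp [fmax]
  · exact le_trans (h i hi) (le_fmax hi)

/-! ### Abel summation machinery -/

lemma abel_id (c y : ℕ → ℝ) (N : ℕ) :
    ∑ k ∈ range N, c k * y k
      = c N * (∑ r ∈ range N, y r)
        + ∑ t ∈ range N, (c t - c (t + 1)) * (∑ r ∈ range (t + 1), y r) := by
  induction N with
  | zero => simp
  | succ N ih =>
    rw [sum_range_succ, ih,
      sum_range_succ (fun t => (c t - c (t + 1)) * (∑ r ∈ range (t + 1), y r)) N,
      sum_range_succ y N]
    ring

lemma abel_maj {N : ℕ} {c y z : ℕ → ℝ} (hc : Antitone c) (hc0 : ∀ k, 0 ≤ c k)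
    (h : ∀ t, t ≤ N → ∑ r ∈ range t, y r ≤ ∑ r ∈ range t, z r) :
    ∑ k ∈ range N, c k * y k ≤ ∑ k ∈ range N, c k * z k := by
  rw [abel_id c y N, abel_id c z N]
  refine add_le_add (mul_le_mul_of_nonneg_left (h N le_rfl) (hc0 N)) (sum_le_sum ?_)
  intro t ht
  exact mul_le_mul_of_nonneg_left (h (t + 1) (mem_range.mp ht))
    (sub_nonneg.mpr (hc (Nat.le_succ t)))

lemma card_prefix (N t : ℕ) (ht : t ≤ N) :
    (univ.filter (fun r : Fin N => (r : ℕ) < t)).card = t := by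
  have h := Finset.card_bij (s := univ.filter (fun r : Fin N => (r : ℕ) < t))
    (t := range t) (fun r _ => (r : ℕ)) ?_ ?_ ?_
  · simpa using h
  · intro r hr; simp only [mem_filter] at hr; exact mem_range.mpr hr.2
  · intro r _ r' _ hrr; exact Fin.ext hrr
  · intro r hr
    exact ⟨⟨r, lt_of_lt_of_le (mem_range.mp hr) ht⟩, by simp [mem_range.mp hr], rfl⟩

lemma card_prefix_le (N t : ℕ) :
    (univ.filter (fun r : Fin N => (r : ℕ) < t)).card ≤ t := by
  have h := Finset.card_le_card_of_injOn (f := fun r : Fin N => (r : ℕ))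
    (s := univ.filter (fun r : Fin N => (r : ℕ) < t)) (t := range t) ?_ ?_
  · simpa using h
  · intro r hr; simp only [mem_coe, mem_filter] at hr; exact mem_range.mpr hr.2
  · intro r _ r' _ hrr; exact Fin.ext hrr

/-- Sum of `g` over any set of at most `t` indices is at most the sum over the
first `t` indices, provided `g` is nonnegative and nonincreasing. -/
lemma sum_le_prefix {N t : ℕ} {g : Fin N → ℝ} (hg0 : ∀ r, 0 ≤ g r)
    (hmono : ∀ r r' : Fin N, r ≤ r' → g r' ≤ g r) {T : Finset (Fin N)} (hT : T.card ≤ t) :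
    ∑ r ∈ T, g r ≤ ∑ r ∈ univ.filter (fun r : Fin N => (r : ℕ) < t), g r := by
  set P := univ.filter (fun r : Fin N => (r : ℕ) < t) with hP
  have hTcard : T.card ≤ P.card := by
    rcases le_or_gt N t with hNt | htN
    · have : P = univ := by
        apply filter_true_of_mem; intro r _; exact lt_of_lt_of_le r.isLt hNt
      rw [this]; exact card_le_univ T
    · rw [hP, card_prefix N t (le_of_lt htN)]; exact hT
  have hsplitT : ∑ r ∈ T, g r = ∑ r ∈ T \ P, g r + ∑ r ∈ T ∩ P, g r := by
    rw [← Finset.sum_sdiff (inter_subset_left (s₂ := P)), Finset.sdiff_inter_self_left]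
  have hsplitP : ∑ r ∈ P, g r = ∑ r ∈ P \ T, g r + ∑ r ∈ T ∩ P, g r := by
    rw [← Finset.sum_sdiff (inter_subset_left (s₂ := T)), Finset.sdiff_inter_self_left,
      Finset.inter_comm]
  have hcard : (T \ P).card ≤ (P \ T).card := by
    have h1 := Finset.card_sdiff_add_card_inter T P
    have h2 := Finset.card_sdiff_add_card_inter P T
    rw [Finset.inter_comm P T] at h2
    omega
  obtain ⟨U, hUsub, hUcard⟩ := Finset.exists_subset_card_eq hcard
  have hcoe : Fintype.card ↥(T \ P : Finset (Fin N)) = Fintype.card ↥U := by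
    rw [Fintype.card_coe, Fintype.card_coe, hUcard]
  set e := Fintype.equivOfCardEq hcoe with he
  have key : ∑ r ∈ T \ P, g r ≤ ∑ r ∈ U, g r := by
    rw [← Finset.sum_coe_sort (T \ P) g, ← Finset.sum_coe_sort U g]
    rw [← Equiv.sum_comp e (fun y : ↥U => g ↑y)]
    apply Finset.sum_le_sum
    intro x _
    apply hmono
    have hx : ↑x ∈ T \ P := x.2
    have hex : (↑(e x) : Fin N) ∈ P \ T := hUsub (e x).2
    simp only [hP, mem_sdiff, mem_filter] at hx hex
    have h1 : (↑(e x) : Fin N).val < t := hex.1.2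
    have h2 : ¬ ((x : Fin N).val < t) := fun hc => hx.2 (by simp [hP, hc])
    exact Fin.le_def.mpr (by omega)
  have hUle : ∑ r ∈ U, g r ≤ ∑ r ∈ P \ T, g r :=
    Finset.sum_le_sum_of_subset_of_nonneg hUsub (fun r _ _ => hg0 r)
  linarith

/-- An injection from `B \ A` to `A \ B` when `B` and `A` have equal cardinality. -/
lemma exists_sdiff_inj {γ : Type*} [DecidableEq γ] {B A : Finset γ} (h : B.card = A.card) :
    ∃ φ : γ → γ, (∀ s ∈ B \ A, ∀ s' ∈ B \ A, φ s = φ s' → s = s') ∧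
      ∀ s ∈ B \ A, φ s ∈ A \ B := by
  classical
  have hcard : (B \ A).card = (A \ B).card := by
    have h1 := Finset.card_sdiff_add_card_inter B A
    have h2 := Finset.card_sdiff_add_card_inter A B
    rw [Finset.inter_comm A B] at h2
    omega
  have hcoe : Fintype.card ↥(B \ A : Finset γ) = Fintype.card ↥(A \ B : Finset γ) := by
    rw [Fintype.card_coe, Fintype.card_coe, hcard]
  set e := Fintype.equivOfCardEq hcoe with he
  refine ⟨fun s => if h : s ∈ B \ A then ↑(e ⟨s, h⟩) else s, ?_, ?_⟩
  · intro s hs s' hs' hss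
    simp only [dif_pos hs, dif_pos hs'] at hss
    have := e.injective (Subtype.ext hss)
    exact congrArg Subtype.val this
  · intro s hs
    simp only [dif_pos hs]
    exact (e ⟨s, hs⟩).2

lemma sum_range_dite {N t : ℕ} (ht : t ≤ N) (f : Fin N → ℝ) :
    (∑ r ∈ range t, if h : r < N then f ⟨r, h⟩ else 0)
      = ∑ s ∈ univ.filter (fun s : Fin N => (s : ℕ) < t), f s := by
  symm
  apply Finset.sum_bij (fun (s : Fin N) (_ : s ∈ univ.filter (fun s : Fin N => (s : ℕ) < t)) => (s : ℕ))
  · intro s hs; simp only [mem_filter] at hs; exact mem_range.mpr hs.2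
  · intro s _ s' _ hss; exact Fin.ext hss
  · intro r hr
    exact ⟨⟨r, lt_of_lt_of_le (mem_range.mp hr) ht⟩, by simp [mem_range.mp hr], rfl⟩
  · intro s _
    rw [dif_pos s.isLt]

/-- Key per-prefix inequality for GSP. -/
lemma gsp_key {v b : Item n m → ℝ} {a : Alloc n m}
    (hv : ∀ x, 0 ≤ v x) (hb0 : ∀ x, 0 ≤ b x) (hb1 : ∀ x, v x ≤ b x)
    (hbsame : ∀ x y : Item n m, x.1 = y.1 → b x ≤ b y → v x ≤ v y)
    (ha : ValidUnder b a) (t : ℕ) {B : Finset (Fin (n * m))}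
    (hB : B.card = (univ.filter (fun s : Fin (n * m) => (s : ℕ) < t)).card) :
    ∑ s ∈ B, v (a s)
      ≤ ∑ s ∈ univ.filter (fun s : Fin (n * m) => (s : ℕ) < t),
          (v (a s) + gspPrice b a s) := by
  classical
  set A := univ.filter (fun s : Fin (n * m) => (s : ℕ) < t) with hA
  obtain ⟨φ, hφinj, hφmem⟩ := exists_sdiff_inj hB
  have hp0 : ∀ s, 0 ≤ gspPrice b a s := fun s => fmax_nonneg (fun k' _ => hb0 _)
  -- per-pair inequality
  have pair : ∀ s ∈ B \ A, v (a s) ≤ v (a (φ s)) + gspPrice b a (φ s) := by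
    intro s hs
    have hφs := hφmem s hs
    have hst : ¬ ((s : ℕ) < t) := by
      intro hc; exact (mem_sdiff.mp hs).2 (by simp [hA, hc])
    have hφt : ((φ s : Fin (n * m)) : ℕ) < t := by
      have := (mem_sdiff.mp hφs).1; simp only [hA, mem_filter] at this; exact this.2
    have hlt : φ s < s := Fin.lt_def.mpr (by omega)
    have hle : b (a s) ≤ b (a (φ s)) := ha (φ s) s (le_of_lt hlt)
    by_cases hsame : (a s).1 = (a (φ s)).1
    · have h1 := hbsame _ _ hsame hle
      have h2 := hp0 (φ s)
      linarith
    · have hmem : s ∈ univ.filter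
          (fun k' : Fin (n * m) => φ s < k' ∧ (a k').1 ≠ (a (φ s)).1) :=
        mem_filter.mpr ⟨mem_univ _, hlt, hsame⟩
      have h1 : b (a s) ≤ gspPrice b a (φ s) := by
        rw [gspPrice]; exact le_fmax (f := fun k' => b (a k')) hmem
      have h2 := hb1 (a s)
      have h3 := hv (a (φ s))
      linarith
  -- assemble
  have hsum1 : ∑ s ∈ B \ A, v (a s)
      ≤ ∑ s ∈ B \ A, (v (a (φ s)) + gspPrice b a (φ s)) := Finset.sum_le_sum pair
  have hsum2 : ∑ s ∈ B \ A, (v (a (φ s)) + gspPrice b a (φ s))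
      = ∑ w ∈ (B \ A).image φ, (v (a w) + gspPrice b a w) :=
    (Finset.sum_image (f := fun w => v (a w) + gspPrice b a w) (fun x hx y hy hxy => hφinj x hx y hy hxy)).symm
  have hsum3 : ∑ w ∈ (B \ A).image φ, (v (a w) + gspPrice b a w)
      ≤ ∑ w ∈ A \ B, (v (a w) + gspPrice b a w) := by
    apply Finset.sum_le_sum_of_subset_of_nonneg
    · intro w hw
      obtain ⟨s, hs, rfl⟩ := Finset.mem_image.mp hw
      exact hφmem s hs
    · intro w _ _; exact add_nonneg (hv _) (hp0 _)
  have hsplitB : ∑ s ∈ B, v (a s) = ∑ s ∈ B \ A, v (a s) + ∑ s ∈ B ∩ A, v (a s) := by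
    rw [← Finset.sum_sdiff (inter_subset_left (s₂ := A)), Finset.sdiff_inter_self_left]
  have hsplitA : ∑ s ∈ A, (v (a s) + gspPrice b a s)
      = ∑ s ∈ A \ B, (v (a s) + gspPrice b a s)
        + ∑ s ∈ B ∩ A, (v (a s) + gspPrice b a s) := by
    rw [← Finset.sum_sdiff (inter_subset_left (s₂ := B)), Finset.sdiff_inter_self_left,
      Finset.inter_comm]
  have hinter : ∑ s ∈ B ∩ A, v (a s) ≤ ∑ s ∈ B ∩ A, (v (a s) + gspPrice b a s) := by
    apply Finset.sum_le_sum; intro s _; have := hp0 s; linarith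
  linarith

/-- Key per-prefix inequality for VCG. -/
lemma vcg_key {v b : Item n m → ℝ} {a : Alloc n m}
    (hv : ∀ x, 0 ≤ v x) (hb0 : ∀ x, 0 ≤ b x) (hb1 : ∀ x, v x ≤ b x)
    (hbsame : ∀ x y : Item n m, x.1 = y.1 → b x ≤ b y → v x ≤ v y)
    (ha : ValidUnder b a) (σ : Fin n → Equiv.Perm (Fin (n * m)))
    (hσ : ∀ i, ∀ r r' : Fin (n * m), r ≤ r' →
      exclBids b i (a (σ i r')) ≤ exclBids b i (a (σ i r)))
    (t : ℕ) {B : Finset (Fin (n * m))}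
    (hB : B.card = (univ.filter (fun s : Fin (n * m) => (s : ℕ) < t)).card) :
    ∑ s ∈ B, v (a s)
      ≤ (∑ s ∈ univ.filter (fun s : Fin (n * m) => (s : ℕ) < t), v (a s))
        + ∑ i : Fin n,
            ((∑ s ∈ univ.filter (fun s : Fin (n * m) => (s : ℕ) < t),
                exclBids b i (a (σ i s)))
              - ∑ s ∈ univ.filter (fun s : Fin (n * m) => (s : ℕ) < t),
                  exclBids b i (a s)) := by
  classical
  set A := univ.filter (fun s : Fin (n * m) => (s : ℕ) < t) with hA
  obtain ⟨φ, hφinj, hφmem⟩ := exists_sdiff_inj hB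
  have hex0 : ∀ i x, 0 ≤ exclBids b i x := by
    intro i x; unfold exclBids; by_cases h : x.1 = i <;> simp [h, hb0 x]
  -- the overcharge function
  set χ : Fin (n * m) → ℝ :=
    fun s => if (a (φ s)).1 = (a s).1 then 0 else b (a s) with hχ
  have hχ0 : ∀ s, 0 ≤ χ s := by
    intro s; rw [hχ]; by_cases h : (a (φ s)).1 = (a s).1 <;> simp [h, hb0]
  -- per-pair inequality
  have pair : ∀ s ∈ B \ A, v (a s) ≤ v (a (φ s)) + χ s := by
    intro s hs
    have hφs := hφmem s hs
    have hst : ¬ ((s : ℕ) < t) := by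
      intro hc; exact (mem_sdiff.mp hs).2 (by simp [hA, hc])
    have hφt : ((φ s : Fin (n * m)) : ℕ) < t := by
      have := (mem_sdiff.mp hφs).1; simp only [hA, mem_filter] at this; exact this.2
    have hlt : φ s < s := Fin.lt_def.mpr (by omega)
    have hle : b (a s) ≤ b (a (φ s)) := ha (φ s) s (le_of_lt hlt)
    rw [hχ]
    by_cases hsame : (a (φ s)).1 = (a s).1
    · have h1 := hbsame _ _ hsame.symm hle
      simp only [if_pos hsame]
      linarith
    · simp only [if_neg hsame]
      have h2 := hb1 (a s)
      have h3 := hv (a (φ s))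
      linarith
  -- step 2: welfare comparison
  have hstep2 : ∑ s ∈ B, v (a s)
      ≤ ∑ s ∈ A, v (a s) + ∑ s ∈ B \ A, χ s := by
    have hsum1 : ∑ s ∈ B \ A, v (a s)
        ≤ ∑ s ∈ B \ A, (v (a (φ s)) + χ s) := Finset.sum_le_sum pair
    have hsum2 : ∑ s ∈ B \ A, v (a (φ s)) = ∑ w ∈ (B \ A).image φ, v (a w) :=
      (Finset.sum_image (f := fun w => v (a w))
        (fun x hx y hy hxy => hφinj x hx y hy hxy)).symm
    have hsum3 : ∑ w ∈ (B \ A).image φ, v (a w) ≤ ∑ w ∈ A \ B, v (a w) := by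
      apply Finset.sum_le_sum_of_subset_of_nonneg
      · intro w hw
        obtain ⟨x, hx, rfl⟩ := Finset.mem_image.mp hw
        exact hφmem x hx
      · intro w _ _; exact hv _
    have hsplitB : ∑ s ∈ B, v (a s) = ∑ s ∈ B \ A, v (a s) + ∑ s ∈ B ∩ A, v (a s) := by
      rw [← Finset.sum_sdiff (inter_subset_left (s₂ := A)), Finset.sdiff_inter_self_left]
    have hsplitA : ∑ s ∈ A, v (a s) = ∑ s ∈ A \ B, v (a s) + ∑ s ∈ B ∩ A, v (a s) := by
      rw [← Finset.sum_sdiff (inter_subset_left (s₂ := B)), Finset.sdiff_inter_self_left,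
        Finset.inter_comm]
    rw [Finset.sum_add_distrib] at hsum1
    linarith
  -- step 3: decompose the overcharge per bidder
  have hstep3 : ∑ s ∈ B \ A, χ s
      = ∑ i : Fin n, ∑ s ∈ B \ A,
          (if (a (φ s)).1 = i ∧ (a s).1 ≠ i then b (a s) else 0) := by
    rw [Finset.sum_comm]
    apply Finset.sum_congr rfl
    intro s _
    rw [hχ]
    by_cases hsame : (a (φ s)).1 = (a s).1
    · simp only [if_pos hsame]
      symm
      apply Finset.sum_eq_zero
      intro i _
      by_cases hi : (a (φ s)).1 = i
      · have : ¬ ((a s).1 ≠ i) := by rw [← hi, hsame]; simp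
        simp [hi, this]
      · simp [hi]
    · simp only [if_neg hsame]
      rw [Finset.sum_eq_single ((a (φ s)).1)]
      · have : (a s).1 ≠ (a (φ s)).1 := fun hc => hsame hc.symm
        simp [this]
      · intro j _ hj
        rw [if_neg]
        rintro ⟨h1, -⟩
        exact hj h1.symm
      · intro h; exact absurd (mem_univ _) h
  -- step 4: per-bidder bound via the sorted permutation
  have hstep4 : ∀ i : Fin n,
      (∑ s ∈ B \ A, (if (a (φ s)).1 = i ∧ (a s).1 ≠ i then b (a s) else 0))
        + ∑ s ∈ A, exclBids b i (a s)
      ≤ ∑ s ∈ A, exclBids b i (a (σ i s)) := by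
    intro i
    set D := (B \ A).filter (fun s => (a (φ s)).1 = i ∧ (a s).1 ≠ i) with hD
    have hsum1 : ∑ s ∈ B \ A, (if (a (φ s)).1 = i ∧ (a s).1 ≠ i then b (a s) else 0)
        = ∑ s ∈ D, b (a s) := by
      rw [hD, Finset.sum_filter]
    have hsum2 : ∑ s ∈ A, exclBids b i (a s)
        = ∑ s ∈ A.filter (fun s => ¬ (a s).1 = i), b (a s) := by
      conv_rhs => rw [Finset.sum_filter]
      apply Finset.sum_congr rfl
      intro s _
      unfold exclBids
      by_cases h : (a s).1 = i <;> simp [h]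
    set T : Finset (Fin (n * m)) := D ∪ A.filter (fun s => ¬ (a s).1 = i) with hT
    have hdisj : Disjoint D (A.filter (fun s => ¬ (a s).1 = i)) := by
      rw [Finset.disjoint_left]
      intro s hsD hsA
      have h1 : s ∈ B \ A := Finset.mem_of_mem_filter s hsD
      have h2 : s ∈ A := Finset.mem_of_mem_filter s hsA
      exact (mem_sdiff.mp h1).2 h2
    have hTsum : ∑ s ∈ T, b (a s)
        = ∑ s ∈ D, b (a s) + ∑ s ∈ A.filter (fun s => ¬ (a s).1 = i), b (a s) := by
      rw [hT, Finset.sum_union hdisj]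
    have hTowner : ∀ s ∈ T, (a s).1 ≠ i := by
      intro s hs
      rcases Finset.mem_union.mp hs with h | h
      · exact ((Finset.mem_filter.mp h).2).2
      · exact (Finset.mem_filter.mp h).2
    have hTex : ∑ s ∈ T, b (a s) = ∑ s ∈ T, exclBids b i (a s) := by
      apply Finset.sum_congr rfl
      intro s hs
      unfold exclBids
      rw [if_neg (hTowner s hs)]
    -- cardinality bound
    have hDcard : D.card ≤ (A.filter (fun s => (a s).1 = i)).card := by
      apply Finset.card_le_card_of_injOn φ
      · intro s hs
        rw [hD, Finset.mem_coe, Finset.mem_filter] at hs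
        have h1 := hφmem s hs.1
        rw [Finset.mem_coe, Finset.mem_filter]
        exact ⟨(mem_sdiff.mp h1).1, hs.2.1⟩
      · intro x hx y hy hxy
        rw [Finset.mem_coe, hD, Finset.mem_filter] at hx hy
        exact hφinj x hx.1 y hy.1 hxy
    have hAsplit := Finset.card_filter_add_card_filter_not
      (s := A) (p := fun s => (a s).1 = i)
    have hTcard : T.card ≤ t := by
      have h1 : T.card ≤ D.card + (A.filter (fun s => ¬ (a s).1 = i)).card :=
        Finset.card_union_le _ _
      have h2 : A.card ≤ t := by rw [hA]; exact card_prefix_le _ _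
      omega
    -- reindex through the permutation and apply the prefix bound
    have hre : ∑ s ∈ T, exclBids b i (a s)
        = ∑ r ∈ T.image (σ i).symm, exclBids b i (a (σ i r)) := by
      rw [Finset.sum_image (f := fun r => exclBids b i (a (σ i r)))
        (fun x _ y _ hxy => (σ i).symm.injective hxy)]
      apply Finset.sum_congr rfl
      intro s _
      rw [Equiv.apply_symm_apply]
    have hTcard' : (T.image (σ i).symm).card ≤ t := by
      rw [Finset.card_image_of_injective _ (σ i).symm.injective]; exact hTcard
    have hpre := sum_le_prefix (g := fun r => exclBids b i (a (σ i r)))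
      (fun r => hex0 i _) (fun r r' hrr => hσ i r r' hrr) hTcard'
    calc (∑ s ∈ B \ A, (if (a (φ s)).1 = i ∧ (a s).1 ≠ i then b (a s) else 0))
          + ∑ s ∈ A, exclBids b i (a s)
        = ∑ s ∈ T, b (a s) := by rw [hsum1, hsum2, hTsum]
      _ = ∑ s ∈ T, exclBids b i (a s) := hTex
      _ = ∑ r ∈ T.image (σ i).symm, exclBids b i (a (σ i r)) := hre
      _ ≤ ∑ s ∈ A, exclBids b i (a (σ i s)) := by rw [hA]; exact hpre
  -- combine
  have hfinal : ∑ s ∈ B \ A, χ s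
      ≤ ∑ i : Fin n, ((∑ s ∈ A, exclBids b i (a (σ i s))) - ∑ s ∈ A, exclBids b i (a s)) := by
    rw [hstep3]
    apply Finset.sum_le_sum
    intro i _
    have := hstep4 i
    linarith
  linarith

lemma othersWelfare_eq (c : ℕ → ℝ) (b : Item n m → ℝ) (a : Alloc n m) (i : Fin n) :
    othersWelfare c b a i = ∑ k : Fin (n * m), c k * exclBids b i (a k) := by
  apply Finset.sum_congr rfl
  intro k _
  unfold exclBids
  by_cases h : (a k).1 = i <;> simp [h]

lemma main_gsp {v b : Item n m → ℝ} {a : Alloc n m} {c : ℕ → ℝ}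
    (hv : ∀ x, 0 ≤ v x) (hb0 : ∀ x, 0 ≤ b x) (hb1 : ∀ x, v x ≤ b x)
    (hbsame : ∀ x y : Item n m, x.1 = y.1 → b x ≤ b y → v x ≤ v y)
    (ha : ValidUnder b a) (hc0 : ∀ k, 0 ≤ c k) (hcmono : Antitone c) :
    welOpt c v ≤ wel c v a + ∑ i : Fin n, gspPay c b a i := by
  classical
  have hp0 : ∀ s, 0 ≤ gspPrice b a s := fun s => fmax_nonneg (fun k' _ => hb0 _)
  have hwel0 : 0 ≤ wel c v a :=
    Finset.sum_nonneg (fun k _ => mul_nonneg (hc0 _) (hv _))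
  have hpay0 : 0 ≤ ∑ i : Fin n, gspPay c b a i := by
    apply Finset.sum_nonneg
    intro i _
    apply Finset.sum_nonneg
    intro k _
    by_cases h : (a k).1 = i
    · simp only [if_pos h]; exact mul_nonneg (hc0 _) (hp0 _)
    · simp [h]
  have hpay : ∑ i : Fin n, gspPay c b a i
      = ∑ k : Fin (n * m), c k * gspPrice b a k := by
    unfold gspPay
    rw [Finset.sum_comm]
    apply Finset.sum_congr rfl
    intro k _
    rw [Finset.sum_ite_eq]
    simp
  apply fmax_le (add_nonneg hwel0 hpay0)
  intro a' _
  set y : ℕ → ℝ := fun k => if h : k < n * m then v (a' ⟨k, h⟩) else 0 with hy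
  set z : ℕ → ℝ :=
    fun k => if h : k < n * m then v (a ⟨k, h⟩) + gspPrice b a ⟨k, h⟩ else 0 with hz
  have hwely : wel c v a' = ∑ k ∈ range (n * m), c k * y k := by
    rw [wel, ← Fin.sum_univ_eq_sum_range (fun k => c k * y k) (n * m)]
    apply Finset.sum_congr rfl
    intro k _
    simp only [hy, dif_pos k.isLt, Fin.eta]
  have hwelz : ∑ k ∈ range (n * m), c k * z k
      = wel c v a + ∑ i : Fin n, gspPay c b a i := by
    rw [hpay, wel, ← Finset.sum_add_distrib,
      ← Fin.sum_univ_eq_sum_range (fun k => c k * z k) (n * m)]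
    apply Finset.sum_congr rfl
    intro k _
    simp only [hz, dif_pos k.isLt, Fin.eta]
    ring
  rw [hwely, ← hwelz]
  apply abel_maj hcmono hc0
  intro t ht
  rw [hy, hz, sum_range_dite ht (fun s => v (a' s)),
    sum_range_dite ht (fun s => v (a s) + gspPrice b a s)]
  set A := univ.filter (fun s : Fin (n * m) => (s : ℕ) < t) with hA
  set B := A.image (fun r => a.symm (a' r)) with hBdef
  have hinj : ∀ x ∈ A, ∀ y ∈ A, a.symm (a' x) = a.symm (a' y) → x = y :=
    fun x _ y _ hxy => a'.injective (a.symm.injective hxy)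
  have hsum : ∑ s ∈ A, v (a' s) = ∑ s ∈ B, v (a s) := by
    rw [hBdef, Finset.sum_image (f := fun w => v (a w)) hinj]
    apply Finset.sum_congr rfl
    intro s _
    rw [Equiv.apply_symm_apply]
  have hBcard : B.card = A.card := Finset.card_image_of_injOn hinj
  rw [hsum]
  exact gsp_key hv hb0 hb1 hbsame ha t hBcard

lemma main_vcg {v b : Item n m → ℝ} {a : Alloc n m} {c : ℕ → ℝ}
    (hv : ∀ x, 0 ≤ v x) (hb0 : ∀ x, 0 ≤ b x) (hb1 : ∀ x, v x ≤ b x)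
    (hbsame : ∀ x y : Item n m, x.1 = y.1 → b x ≤ b y → v x ≤ v y)
    (ha : ValidUnder b a) (hc0 : ∀ k, 0 ≤ c k) (hcmono : Antitone c) :
    welOpt c v ≤ wel c v a + ∑ i : Fin n, vcgPay c b a i := by
  classical
  set σ : Fin n → Equiv.Perm (Fin (n * m)) :=
    fun i => Tuple.sort (fun k => (-(exclBids b i (a k)) : ℝ)) with hσdef
  have hσ : ∀ i, ∀ r r' : Fin (n * m), r ≤ r' →
      exclBids b i (a (σ i r')) ≤ exclBids b i (a (σ i r)) := by
    intro i r r' hrr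
    have := Tuple.monotone_sort (fun k => (-(exclBids b i (a k)) : ℝ)) hrr
    simp only [Function.comp_apply] at this
    rw [hσdef]
    linarith
  have hwel0 : 0 ≤ wel c v a :=
    Finset.sum_nonneg (fun k _ => mul_nonneg (hc0 _) (hv _))
  have hOle : ∀ i, othersWelfare c b a i ≤ woptWithout c b i := by
    intro i
    have h1 : othersWelfare c b a i = bidWelfare c (exclBids b i) a := by
      rw [othersWelfare_eq]; rfl
    rw [h1, woptWithout]
    exact le_fmax (f := fun a' => bidWelfare c (exclBids b i) a') (mem_univ a)
  have hpay0 : 0 ≤ ∑ i : Fin n, vcgPay c b a i :=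
    Finset.sum_nonneg (fun i _ => sub_nonneg.mpr (hOle i))
  apply fmax_le (add_nonneg hwel0 hpay0)
  intro a' _
  set y : ℕ → ℝ := fun k => if h : k < n * m then v (a' ⟨k, h⟩) else 0 with hy
  set z : ℕ → ℝ :=
    fun k => if h : k < n * m then
      v (a ⟨k, h⟩) + ∑ i : Fin n,
        (exclBids b i (a (σ i ⟨k, h⟩)) - exclBids b i (a ⟨k, h⟩))
      else 0 with hz
  have hwely : wel c v a' = ∑ k ∈ range (n * m), c k * y k := by
    rw [wel, ← Fin.sum_univ_eq_sum_range (fun k => c k * y k) (n * m)]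
    apply Finset.sum_congr rfl
    intro k _
    simp only [hy, dif_pos k.isLt, Fin.eta]
  have hwelz : ∑ k ∈ range (n * m), c k * z k
      = wel c v a + ∑ i : Fin n,
          (bidWelfare c (exclBids b i) ((σ i).trans a) - othersWelfare c b a i) := by
    rw [← Fin.sum_univ_eq_sum_range (fun k => c k * z k) (n * m)]
    have hterm : ∀ k : Fin (n * m),
        c k * z k = c k * v (a k)
          + ∑ i : Fin n, (c k * exclBids b i (a (σ i k)) - c k * exclBids b i (a k)) := by
      intro k
      simp only [hz, dif_pos k.isLt, Fin.eta]
      rw [mul_add, Finset.mul_sum]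
      congr 1
      apply Finset.sum_congr rfl
      intro i _
      ring
    rw [Finset.sum_congr rfl (fun k _ => hterm k), Finset.sum_add_distrib]
    congr 1
    rw [Finset.sum_comm]
    apply Finset.sum_congr rfl
    intro i _
    rw [Finset.sum_sub_distrib, othersWelfare_eq]
    rfl
  have hle2 : ∑ i : Fin n,
      (bidWelfare c (exclBids b i) ((σ i).trans a) - othersWelfare c b a i)
        ≤ ∑ i : Fin n, vcgPay c b a i := by
    apply Finset.sum_le_sum
    intro i _
    apply sub_le_sub_right
    exact le_fmax (f := fun a'' => bidWelfare c (exclBids b i) a'') (mem_univ ((σ i).trans a))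
  rw [hwely]
  calc ∑ k ∈ range (n * m), c k * y k
      ≤ ∑ k ∈ range (n * m), c k * z k := by
        apply abel_maj hcmono hc0
        intro t ht
        rw [hy, hz, sum_range_dite ht (fun s => v (a' s)),
          sum_range_dite ht (fun s => v (a s) + ∑ i : Fin n,
            (exclBids b i (a (σ i s)) - exclBids b i (a s)))]
        set A := univ.filter (fun s : Fin (n * m) => (s : ℕ) < t) with hA
        set B := A.image (fun r => a.symm (a' r)) with hBdef
        have hinj : ∀ x ∈ A, ∀ y ∈ A, a.symm (a' x) = a.symm (a' y) → x = y :=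
          fun x _ y _ hxy => a'.injective (a.symm.injective hxy)
        have hsum : ∑ s ∈ A, v (a' s) = ∑ s ∈ B, v (a s) := by
          rw [hBdef, Finset.sum_image (f := fun w => v (a w)) hinj]
          apply Finset.sum_congr rfl
          intro s _
          rw [Equiv.apply_symm_apply]
        have hBcard : B.card = A.card := Finset.card_image_of_injOn hinj
        have hkey := vcg_key hv hb0 hb1 hbsame ha σ hσ t hBcard
        rw [← hA] at hkey
        have heq : ∑ s ∈ A, (v (a s) + ∑ i : Fin n,
              (exclBids b i (a (σ i s)) - exclBids b i (a s)))
            = ∑ s ∈ A, v (a s) + ∑ i : Fin n,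
                (∑ s ∈ A, exclBids b i (a (σ i s)) - ∑ s ∈ A, exclBids b i (a s)) := by
          rw [Finset.sum_add_distrib]
          congr 1
          rw [Finset.sum_comm]
          apply Finset.sum_congr rfl
          intro i _
          rw [Finset.sum_sub_distrib]
        rw [hsum, heq]
        exact hkey
      _ = wel c v a + ∑ i : Fin n,
          (bidWelfare c (exclBids b i) ((σ i).trans a) - othersWelfare c b a i) := hwelz
      _ ≤ wel c v a + ∑ i : Fin n, vcgPay c b a i := by linarith

/-- Smoothness inequality: welfare plus revenue of any valid allocation is at
least the optimal welfare, for both GSP and VCG. -/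
theorem welfare_add_revenue_ge_optimal_welfare
    (n m K : ℕ) (v : Item n m → ℝ) (c : ℕ → ℝ)
    (hv : ∀ x : Item n m, 0 ≤ v x)
    (hvmono : ∀ (i : Fin n) (j j' : Fin m), j ≤ j' → v (i, j') ≤ v (i, j))
    (hc1 : c 0 ≤ 1) (hc0 : ∀ k, 0 ≤ c k) (hcmono : Antitone c)
    (hcK : ∀ k, K ≤ k → c k = 0)
    (α : Fin n → ℝ) (hα : ∀ i, 1 ≤ α i)
    (a : Alloc n m) (ha : ValidUnder (fun x => α x.1 * v x) a) (M : Mech) :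
    welOpt c v ≤ wel c v a + ∑ i : Fin n, pay M c (fun x => α x.1 * v x) a i := by
  have hb0 : ∀ x : Item n m, 0 ≤ α x.1 * v x :=
    fun x => mul_nonneg (le_trans zero_le_one (hα _)) (hv x)
  have hb1 : ∀ x : Item n m, v x ≤ α x.1 * v x :=
    fun x => le_mul_of_one_le_left (hv x) (hα _)
  have hbsame : ∀ x y : Item n m, x.1 = y.1 →
      α x.1 * v x ≤ α y.1 * v y → v x ≤ v y := by
    intro x y hxy hle
    rw [hxy] at hle
    exact le_of_mul_le_mul_left hle (lt_of_lt_of_le one_pos (hα y.1))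
  cases M
  · exact main_gsp hv hb0 hb1 hbsame ha hc0 hcmono
  · exact main_vcg hv hb0 hb1 hbsame ha hc0 hcmono

end
end SponsoredShopping
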